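/- Suppose A = C ∘ A_1 and B = C ∘ B_1 for finite Blaschke products A_1, B_1, C with deg(C) > 1, let ζ ∈ 𝔻 be a regular value of both A and B (of common degree d), and label the fibers A^{-1}(ζ) = {a_1, …, a_d}, B^{-1}(ζ) = {b_1, …, b_d} so that A_1(a_i) = B_1(b_i) ∈ C^{-1}(ζ) for every i. Define the equivalence relation ∼₁ on {1, …, d} by i ∼₁ j if and only if A_1(a_i) = A_1(a_j). Then ∼₁ is a non-trivial equivalence relation, γ_A*(i) ∼₁ γ_B*(i) for every admissible loop γ and every index i, and the equivalence relation ∼ is contained in ∼₁; in particular ∼ is non-trivial for this labeling. -/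

import Mathlib

open Complex Metric Set

/-- `B` is a finite Blaschke product of degree `d ≥ 1`: on the closed unit disk it is
given by `B z = λ · ∏ i (z - a i)/(1 - conj (a i) · z)` with `|λ| = 1` and all
`a i` in the open unit disk. -/
def IsBlaschke (d : ℕ) (B : ℂ → ℂ) : Prop :=
  1 ≤ d ∧ ∃ (l : ℂ) (a : Fin d → ℂ), ‖l‖ = 1 ∧ (∀ i, ‖a i‖ < 1) ∧
    ∀ z : ℂ, ‖z‖ ≤ 1 →
      B z = l * ∏ i, (z - a i) / (1 - (starRingEnd ℂ) (a i) * z)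

/-- The set of critical values of `B` in the unit disk. -/
def critVals (B : ℂ → ℂ) : Set ℂ :=
  B '' {z | z ∈ Metric.ball (0:ℂ) 1 ∧ deriv B z = 0}

/-- `γ : [0,1] → 𝔻` is a loop based at `ζ` avoiding the set `S`. -/
def IsAdmLoop (S : Set ℂ) (ζ : ℂ) (γ : ℝ → ℂ) : Prop :=
  ContinuousOn γ (Set.Icc 0 1) ∧ γ 0 = ζ ∧ γ 1 = ζ ∧
    ∀ t ∈ Set.Icc (0:ℝ) 1, γ t ∈ Metric.ball (0:ℂ) 1 ∧ γ t ∉ S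

/-- The lift of the loop `γ` under `B` (within the unit disk) starting at `b i`
terminates at `b j`; for an admissible loop this says `γ_B*(i) = j`. -/
def LiftEnds {d : ℕ} (B : ℂ → ℂ) (b : Fin d → ℂ) (γ : ℝ → ℂ) (i j : Fin d) : Prop :=
  ∃ γ' : ℝ → ℂ, ContinuousOn γ' (Set.Icc 0 1) ∧
    (∀ t ∈ Set.Icc (0:ℝ) 1, γ' t ∈ Metric.ball (0:ℂ) 1 ∧ B (γ' t) = γ t) ∧
    γ' 0 = b i ∧ γ' 1 = b j

/-- `b : Fin d → ℂ` is a labeling of the fiber `B⁻¹(ζ)` in the unit disk. -/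
def IsFiberLabeling {d : ℕ} (B : ℂ → ℂ) (ζ : ℂ) (b : Fin d → ℂ) : Prop :=
  Function.Injective b ∧ (∀ i, b i ∈ Metric.ball (0:ℂ) 1) ∧
    ∀ z ∈ Metric.ball (0:ℂ) 1, (B z = ζ ↔ ∃ i, z = b i)

/-- The partition `Par` of `Fin d` is respected by the monodromy group of `B`
based at `ζ` (with fiber labeling `b`): every monodromy permutation maps each
block into a single block. -/
def RespectsPartition {d : ℕ} (B : ℂ → ℂ) (ζ : ℂ) (b : Fin d → ℂ)
    (Par : Set (Set (Fin d))) : Prop :=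
  ∀ γ : ℝ → ℂ, IsAdmLoop (critVals B) ζ γ →
    ∀ Q ∈ Par, ∃ Q' ∈ Par, ∀ i ∈ Q, ∀ j, LiftEnds B b γ i j → j ∈ Q'

/-- The symmetric relation `≃` of Definition 1.8: `j ≃ k` iff there is a loop `γ`
in `𝔻` based at `ζ` avoiding the critical values of `A` and `B`, and an index `i`,
with `γ_B*(i) = j` and `γ_A*(i) = k` (or vice versa). -/
def monSimeq {d : ℕ} (A B : ℂ → ℂ) (ζ : ℂ) (a b : Fin d → ℂ) (j k : Fin d) : Prop :=
  ∃ γ : ℝ → ℂ, IsAdmLoop (critVals A ∪ critVals B) ζ γ ∧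
    ∃ i, (LiftEnds B b γ i j ∧ LiftEnds A a γ i k) ∨
         (LiftEnds B b γ i k ∧ LiftEnds A a γ i j)

/-- The equivalence relation `∼` generated by `≃`. -/
def monSim {d : ℕ} (A B : ℂ → ℂ) (ζ : ℂ) (a b : Fin d → ℂ) (j k : Fin d) : Prop :=
  Relation.EqvGen (monSimeq A B ζ a b) j k


namespace BlaschkeAux
open Polynomial


lemma key_identity (a z : ℂ) :
    normSq (1 - (starRingEnd ℂ) a * z) - normSq (z - a) = (1 - normSq a) * (1 - normSq z) := by
  simp [normSq_apply, mul_re, mul_im, conj_re, conj_im, sub_re, sub_im, one_re, one_im]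
  ring

lemma denom_ne {a z : ℂ} (ha : ‖a‖ < 1) (hz : ‖z‖ ≤ 1) :
    1 - (starRingEnd ℂ) a * z ≠ 0 := by
  intro h
  have h2 : (1:ℂ) = (starRingEnd ℂ) a * z := by linear_combination h
  have := congrArg (‖·‖) h2
  simp [map_mul] at this
  nlinarith [norm_nonneg a, norm_nonneg z]

lemma factor_lt {a z : ℂ} (ha : ‖a‖ < 1) (hz : ‖z‖ < 1) :
    ‖z - a‖ < ‖1 - (starRingEnd ℂ) a * z‖ := by
  have h := key_identity a z
  have h1 : normSq (z - a) < normSq (1 - (starRingEnd ℂ) a * z) := by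
    have ha2 : normSq a < 1 := by rw [← Complex.sq_norm]; nlinarith [norm_nonneg a]
    have hz2 : normSq z < 1 := by rw [← Complex.sq_norm]; nlinarith [norm_nonneg z]
    nlinarith
  have := Real.sqrt_lt_sqrt (normSq_nonneg _) h1
  simpa [Complex.norm_def] using this

lemma factor_ge {a z : ℂ} (ha : ‖a‖ < 1) (hz : 1 ≤ ‖z‖) :
    ‖1 - (starRingEnd ℂ) a * z‖ ≤ ‖z - a‖ := by
  have h := key_identity a z
  have h1 : normSq (1 - (starRingEnd ℂ) a * z) ≤ normSq (z - a) := by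
    have hz2 : 1 ≤ normSq z := by
      rw [← Complex.sq_norm]; nlinarith
    have ha2 : normSq a < 1 := by rw [← Complex.sq_norm]; nlinarith [norm_nonneg a]
    nlinarith
  have := Real.sqrt_le_sqrt h1
  simpa [Complex.norm_def] using this

noncomputable def Bnum {e : ℕ} (l : ℂ) (c : Fin e → ℂ) : Polynomial ℂ :=
  Polynomial.C l * ∏ i, (X - Polynomial.C (c i))

noncomputable def Bden {e : ℕ} (c : Fin e → ℂ) : Polynomial ℂ :=
  ∏ i, (1 - Polynomial.C ((starRingEnd ℂ) (c i)) * X)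

noncomputable def Bpol {e : ℕ} (l : ℂ) (c : Fin e → ℂ) (w : ℂ) : Polynomial ℂ :=
  Bnum l c - Polynomial.C w * Bden c

variable {e : ℕ} {l w z : ℂ} {c : Fin e → ℂ}

lemma eval_Bden_ne (hc : ∀ i, ‖c i‖ < 1) (hz : ‖z‖ ≤ 1) :
    (Bden c).eval z ≠ 0 := by
  rw [Bden, eval_prod]
  refine Finset.prod_ne_zero_iff.2 fun i _ => ?_
  simpa using denom_ne (hc i) hz

lemma blaschke_eval (hc : ∀ i, ‖c i‖ < 1) (hz : ‖z‖ ≤ 1) :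
    l * ∏ i, (z - c i) / (1 - (starRingEnd ℂ) (c i) * z)
      = (Bnum l c).eval z / (Bden c).eval z := by
  rw [Bnum, Bden, eval_mul, eval_C, eval_prod, eval_prod, Finset.prod_div_distrib,
    mul_div_assoc]
  simp

lemma coeff_Bpol : (Bpol l c w).coeff e = l - w * ∏ i, (-((starRingEnd ℂ) (c i))) := by
  have h1 : (∏ i : Fin e, (X - Polynomial.C (c i))).coeff e = 1 := by
    have hm : (∏ i : Fin e, (X - Polynomial.C (c i))).Monic :=
      monic_prod_of_monic _ _ fun i _ => monic_X_sub_C _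
    have hd : (∏ i : Fin e, (X - Polynomial.C (c i))).natDegree = e := by
      rw [natDegree_prod_of_monic _ _ fun i _ => monic_X_sub_C (c i)]
      simp
    simpa [hd] using hm.coeff_natDegree
  have h2 : (Bden c).coeff e = ∏ i, (-((starRingEnd ℂ) (c i))) := by
    have := coeff_prod_of_natDegree_le (s := (Finset.univ : Finset (Fin e)))
      (fun i => 1 - Polynomial.C ((starRingEnd ℂ) (c i)) * X) 1 ?_
    · have he : (Finset.univ : Finset (Fin e)).card * 1 = e := by simp
      rw [Bden]
      rw [he] at this
      rw [this]
      refine Finset.prod_congr rfl fun i _ => ?_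
      simp [coeff_one]
    · intro p _
      refine le_trans (natDegree_sub_le _ _) (max_le (by simp) ?_)
      calc (Polynomial.C ((starRingEnd ℂ) (c p)) * X).natDegree ≤ _ := natDegree_mul_le
        _ ≤ 1 := by simp
  rw [Bpol, coeff_sub, Bnum, coeff_C_mul, coeff_C_mul, h1, h2, mul_one]

lemma coeff_Bpol_ne (hl : ‖l‖ = 1) (hc : ∀ i, ‖c i‖ < 1)
    (hw : ‖w‖ < 1) : (Bpol l c w).coeff e ≠ 0 := by
  rw [coeff_Bpol]
  intro h
  have h2 : l = w * ∏ i, (-((starRingEnd ℂ) (c i))) := by linear_combination h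
  have h3 := congrArg (‖·‖) h2
  rw [norm_mul, norm_prod, hl] at h3
  have h4 : ∏ i : Fin e, ‖-((starRingEnd ℂ) (c i))‖ ≤ 1 := by
    refine Finset.prod_le_one (fun i _ => norm_nonneg _) fun i _ => ?_
    simp [(hc i).le]
  nlinarith [norm_nonneg w,
    Finset.prod_nonneg (fun i (_ : i ∈ Finset.univ) => norm_nonneg (-((starRingEnd ℂ) (c i))))]

lemma natDegree_Bpol (hl : ‖l‖ = 1) (hc : ∀ i, ‖c i‖ < 1)
    (hw : ‖w‖ < 1) : (Bpol l c w).natDegree = e := by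
  have hub : (Bpol l c w).natDegree ≤ e := ?_
  · exact le_antisymm hub (le_natDegree_of_ne_zero (coeff_Bpol_ne hl hc hw))
  rw [Bpol]
  refine le_trans (natDegree_sub_le (Bnum l c) (Polynomial.C w * Bden c)) (max_le ?_ ?_)
  · rw [Bnum]
    refine le_trans natDegree_mul_le ?_
    rw [natDegree_prod_of_monic _ _ fun i _ => monic_X_sub_C (c i)]
    simp
  · refine le_trans natDegree_mul_le ?_
    rw [Bden]
    simp only [natDegree_C, zero_add]
    refine le_trans (natDegree_prod_le _ _) ?_
    have hstep : ∀ i : Fin e, (1 - Polynomial.C ((starRingEnd ℂ) (c i)) * X).natDegree ≤ 1 := by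
      intro i
      refine le_trans (natDegree_sub_le _ _) (max_le (by simp) ?_)
      exact le_trans natDegree_mul_le (by simp)
    calc ∑ i : Fin e, (1 - Polynomial.C ((starRingEnd ℂ) (c i)) * X).natDegree
        ≤ ∑ _i : Fin e, 1 := Finset.sum_le_sum (f := fun i : Fin e => (1 - Polynomial.C ((starRingEnd ℂ) (c i)) * X).natDegree) fun i _ => hstep i
      _ = e := by simp

lemma Bpol_ne_zero (hl : ‖l‖ = 1) (hc : ∀ i, ‖c i‖ < 1)
    (hw : ‖w‖ < 1) : Bpol l c w ≠ 0 := fun h =>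
  coeff_Bpol_ne hl hc hw (by rw [h]; simp)

lemma Bpol_root_in_ball (hl : ‖l‖ = 1) (hc : ∀ i, ‖c i‖ < 1)
    (hw : ‖w‖ < 1) (hz : (Bpol l c w).eval z = 0) : ‖z‖ < 1 := by
  by_contra hge
  push_neg at hge
  have heq : l * ∏ i, (z - c i) = w * ∏ i, (1 - (starRingEnd ℂ) (c i) * z) := by
    have : (Bnum l c).eval z - w * (Bden c).eval z = 0 := by
      simpa [Bpol, eval_sub, eval_mul, eval_C] using hz
    rw [Bnum, Bden] at this
    simp only [eval_mul, eval_C, eval_prod, eval_sub, eval_X, eval_one] at this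
    exact sub_eq_zero.mp this
  have habs := congrArg (‖·‖) heq
  rw [norm_mul, norm_mul, norm_prod, norm_prod, hl, one_mul] at habs
  have hpos : ∀ i : Fin e, 0 < ‖z - c i‖ := fun i => by
    have h1 : ‖z‖ - ‖c i‖ ≤ ‖z - c i‖ := by
      simpa using norm_sub_norm_le z (c i)
    linarith [hc i]
  have hP : 0 < ∏ i : Fin e, ‖z - c i‖ :=
    Finset.prod_pos fun i _ => hpos i
  have hle : ∏ i : Fin e, ‖1 - (starRingEnd ℂ) (c i) * z‖
      ≤ ∏ i : Fin e, ‖z - c i‖ :=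
    Finset.prod_le_prod (fun i _ => norm_nonneg _) fun i _ => factor_ge (hc i) hge
  nlinarith [norm_nonneg w]

lemma Bpol_eval_iff (hc : ∀ i, ‖c i‖ < 1) (hz : ‖z‖ ≤ 1) :
    ((Bnum l c).eval z / (Bden c).eval z = w ↔ (Bpol l c w).eval z = 0) := by
  rw [div_eq_iff (eval_Bden_ne hc hz), Bpol, eval_sub, eval_mul, eval_C, sub_eq_zero]

lemma Bpol_exists_root (he : 1 ≤ e) (hl : ‖l‖ = 1)
    (hc : ∀ i, ‖c i‖ < 1) (hw : ‖w‖ < 1) :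
    ∃ z, ‖z‖ < 1 ∧ (Bpol l c w).eval z = 0 := by
  have hdeg : 0 < (Bpol l c w).degree := by
    rw [degree_eq_natDegree (Bpol_ne_zero hl hc hw), natDegree_Bpol hl hc hw]
    exact_mod_cast Nat.lt_of_lt_of_le Nat.zero_lt_one he
  obtain ⟨z, hz⟩ := Complex.exists_root hdeg
  exact ⟨z, Bpol_root_in_ball hl hc hw hz, hz⟩

lemma blaschke_maps_ball (he : 1 ≤ e) (hl : ‖l‖ = 1)
    (hc : ∀ i, ‖c i‖ < 1) (hz : ‖z‖ < 1) :
    ‖l * ∏ i, (z - c i) / (1 - (starRingEnd ℂ) (c i) * z)‖ < 1 := by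
  rw [norm_mul, norm_prod, hl, one_mul]
  set f : Fin e → ℝ := fun i => ‖(z - c i) / (1 - (starRingEnd ℂ) (c i) * z)‖ with hf
  have hlt : ∀ i, f i < 1 := fun i => by
    show ‖(z - c i) / (1 - (starRingEnd ℂ) (c i) * z)‖ < 1
    rw [norm_div, div_lt_one (norm_pos_iff.mpr (denom_ne (hc i) hz.le))]
    exact factor_lt (hc i) hz
  have hnn : ∀ i, 0 ≤ f i := fun i => norm_nonneg _
  have i0 : Fin e := ⟨0, he⟩
  rw [← Finset.mul_prod_erase Finset.univ f (Finset.mem_univ i0)]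
  calc f i0 * ∏ i ∈ Finset.univ.erase i0, f i
      ≤ f i0 * 1 := mul_le_mul_of_nonneg_left
        (Finset.prod_le_one (fun i _ => hnn i) fun i _ => (hlt i).le) (hnn i0)
    _ < 1 := by rw [mul_one]; exact hlt i0

lemma Bpol_two_or_double (he : 2 ≤ e) (hl : ‖l‖ = 1)
    (hc : ∀ i, ‖c i‖ < 1) (hw : ‖w‖ < 1) :
    (∃ z₁ z₂ : ℂ, z₁ ≠ z₂ ∧ (Bpol l c w).eval z₁ = 0 ∧ (Bpol l c w).eval z₂ = 0) ∨
    (∃ z₀ : ℂ, (Bpol l c w).eval z₀ = 0 ∧ (Bpol l c w).derivative.eval z₀ = 0) := by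
  set P := Bpol l c w with hP
  have hPne : P ≠ 0 := Bpol_ne_zero hl hc hw
  have hcard : P.roots.card = e := by
    rw [← natDegree_Bpol hl hc hw (l := l)]
    exact splits_iff_card_roots.mp (IsAlgClosed.splits P)
  have hpos : 0 < P.roots.card := by omega
  obtain ⟨z₀, hz₀⟩ := Multiset.card_pos_iff_exists_mem.mp hpos
  by_cases hall : ∀ z ∈ P.roots, z = z₀
  · right
    have hcount : P.roots.count z₀ = e := by
      rw [← hcard]; exact Multiset.count_eq_card.mpr fun x hx => (hall x hx).symm
    have hmul : P.rootMultiplicity z₀ = e := by rwa [← count_roots]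
    have hdvd : (X - Polynomial.C z₀) ^ 2 ∣ P := by
      refine dvd_trans (pow_dvd_pow _ ?_) (pow_rootMultiplicity_dvd P z₀)
      omega
    obtain ⟨Q, hQ⟩ := hdvd
    refine ⟨z₀, ?_, ?_⟩
    · rw [hQ]; simp
    · rw [hQ, derivative_mul, derivative_pow]
      simp
  · left
    push_neg at hall
    obtain ⟨z₁, hz₁, hne⟩ := hall
    exact ⟨z₁, z₀, hne, (mem_roots hPne).mp hz₁, (mem_roots hPne).mp hz₀⟩

variable {B C A A₁ : ℂ → ℂ} {d : ℕ}

lemma mem_ball_iff_abs {z : ℂ} : z ∈ Metric.ball (0:ℂ) 1 ↔ ‖z‖ < 1 := by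
  simp [Metric.mem_ball, Complex.dist_eq]

lemma blaschkeEventuallyEq (hB : IsBlaschke e B) {z₀ : ℂ} (hz₀ : ‖z₀‖ < 1) :
    ∃ (l : ℂ) (c : Fin e → ℂ), ‖l‖ = 1 ∧ (∀ i, ‖c i‖ < 1) ∧
      (∀ z : ℂ, ‖z‖ ≤ 1 → B z = (Bnum l c).eval z / (Bden c).eval z) ∧
      B =ᶠ[nhds z₀] fun z => (Bnum l c).eval z / (Bden c).eval z := by
  obtain ⟨he, l, c, hl, hc, hfor⟩ := hB
  refine ⟨l, c, hl, hc, fun z hz => by rw [hfor z hz, blaschke_eval hc hz], ?_⟩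
  have hball : Metric.ball (0:ℂ) 1 ∈ nhds z₀ :=
    Metric.isOpen_ball.mem_nhds (mem_ball_iff_abs.mpr hz₀)
  filter_upwards [hball] with z hz
  rw [hfor z (mem_ball_iff_abs.mp hz).le, blaschke_eval hc (mem_ball_iff_abs.mp hz).le]

lemma blaschkeAnalyticAt (hB : IsBlaschke e B) {z₀ : ℂ} (hz₀ : ‖z₀‖ < 1) :
    AnalyticAt ℂ B z₀ := by
  obtain ⟨l, c, hl, hc, _, hev⟩ := blaschkeEventuallyEq hB hz₀
  have hdiff : DifferentiableOn ℂ (fun z => (Bnum l c).eval z / (Bden c).eval z)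
      (Metric.ball (0:ℂ) 1) := fun z hz =>
    (((Bnum l c).differentiableAt).div ((Bden c).differentiableAt)
      (eval_Bden_ne hc (mem_ball_iff_abs.mp hz).le)).differentiableWithinAt
  have h1 : AnalyticAt ℂ (fun z => (Bnum l c).eval z / (Bden c).eval z) z₀ :=
    hdiff.analyticAt (Metric.isOpen_ball.mem_nhds (mem_ball_iff_abs.mpr hz₀))
  exact h1.congr hev.symm

lemma blaschkeMapsBall (hB : IsBlaschke e B) {z : ℂ} (hz : ‖z‖ < 1) :
    ‖B z‖ < 1 := by
  obtain ⟨he, l, c, hl, hc, hfor⟩ := hB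
  rw [hfor z hz.le]
  exact blaschke_maps_ball he hl hc hz

lemma blaschkeSurj (hB : IsBlaschke e B) {w : ℂ} (hw : ‖w‖ < 1) :
    ∃ z, ‖z‖ < 1 ∧ B z = w := by
  obtain ⟨he, l, c, hl, hc, hfor⟩ := hB
  obtain ⟨z, hz1, hz2⟩ := Bpol_exists_root he hl hc hw
  refine ⟨z, hz1, ?_⟩
  rw [hfor z hz1.le, blaschke_eval hc hz1.le]
  exact (Bpol_eval_iff hc hz1.le).mpr hz2

lemma comp_deriv (hA₁ : IsBlaschke m A₁) (hC : IsBlaschke e C)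
    (hcomp : ∀ z : ℂ, ‖z‖ ≤ 1 → A z = C (A₁ z)) {z : ℂ}
    (hz : ‖z‖ < 1) : deriv A z = deriv C (A₁ z) * deriv A₁ z := by
  have hA₁z : ‖A₁ z‖ < 1 := blaschkeMapsBall hA₁ hz
  have hdC : HasDerivAt C (deriv C (A₁ z)) (A₁ z) :=
    ((blaschkeAnalyticAt hC hA₁z).differentiableAt).hasDerivAt
  have hdA₁ : HasDerivAt A₁ (deriv A₁ z) z :=
    ((blaschkeAnalyticAt hA₁ hz).differentiableAt).hasDerivAt
  have hcompd : HasDerivAt (C ∘ A₁) (deriv C (A₁ z) * deriv A₁ z) z := hdC.comp z hdA₁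
  have hev : A =ᶠ[nhds z] C ∘ A₁ := by
    filter_upwards [Metric.isOpen_ball.mem_nhds (mem_ball_iff_abs.mpr hz)] with x hx
    exact hcomp x (mem_ball_iff_abs.mp hx).le
  exact (hcompd.congr_of_eventuallyEq hev).deriv

lemma critVals_comp_subset (hA₁ : IsBlaschke m A₁) (hC : IsBlaschke e C)
    (hcomp : ∀ z : ℂ, ‖z‖ ≤ 1 → A z = C (A₁ z)) :
    critVals C ⊆ critVals A := by
  rintro v ⟨w, ⟨hw, hwc⟩, rfl⟩
  obtain ⟨z, hz, hz2⟩ := blaschkeSurj hA₁ (mem_ball_iff_abs.mp hw)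
  refine ⟨z, ⟨mem_ball_iff_abs.mpr hz, ?_⟩, ?_⟩
  · rw [comp_deriv hA₁ hC hcomp hz, hz2, hwc, zero_mul]
  · rw [hcomp z hz.le, hz2]

lemma blaschkeTwoFiber (hC : IsBlaschke e C) (he : 2 ≤ e) {ζ : ℂ}
    (hζ : ‖ζ‖ < 1)
    (hnocrit : ∀ w, ‖w‖ < 1 → C w = ζ → deriv C w ≠ 0) :
    ∃ w₁ w₂ : ℂ, ‖w₁‖ < 1 ∧ ‖w₂‖ < 1 ∧ C w₁ = ζ ∧ C w₂ = ζ ∧ w₁ ≠ w₂ := by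
  obtain ⟨he1, l, c, hl, hc, hfor⟩ := hC
  have hval : ∀ z : ℂ, (Bpol l c ζ).eval z = 0 → ‖z‖ < 1 ∧ C z = ζ := by
    intro z hz
    have hzb := Bpol_root_in_ball hl hc hζ hz
    refine ⟨hzb, ?_⟩
    rw [hfor z hzb.le, blaschke_eval hc hzb.le]
    exact (Bpol_eval_iff hc hzb.le).mpr hz
  rcases Bpol_two_or_double he hl hc hζ with ⟨z₁, z₂, hne, h₁, h₂⟩ | ⟨z₀, h₀, h₀'⟩
  · obtain ⟨hb₁, hC₁⟩ := hval z₁ h₁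
    obtain ⟨hb₂, hC₂⟩ := hval z₂ h₂
    exact ⟨z₁, z₂, hb₁, hb₂, hC₁, hC₂, hne⟩
  · -- critical point case: contradiction
    obtain ⟨hb₀, hC₀⟩ := hval z₀ h₀
    exfalso
    refine hnocrit z₀ hb₀ hC₀ ?_
    -- deriv C z₀ = 0
    have hev : C =ᶠ[nhds z₀] fun z => (Bnum l c).eval z / (Bden c).eval z := by
      filter_upwards [Metric.isOpen_ball.mem_nhds (mem_ball_iff_abs.mpr hb₀)] with x hx
      rw [hfor x (mem_ball_iff_abs.mp hx).le, blaschke_eval hc (mem_ball_iff_abs.mp hx).le]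
    have hNz : (Bnum l c).eval z₀ = ζ * (Bden c).eval z₀ := by
      have : (Bnum l c).eval z₀ - ζ * (Bden c).eval z₀ = 0 := by
        simpa [Bpol, eval_sub, eval_mul, eval_C] using h₀
      linear_combination this
    have hN'z : (Bnum l c).derivative.eval z₀ = ζ * (Bden c).derivative.eval z₀ := by
      have : (Bnum l c).derivative.eval z₀ - ζ * (Bden c).derivative.eval z₀ = 0 := by
        simpa [Bpol, derivative_sub, derivative_C_mul, eval_sub, eval_mul, eval_C] using h₀'
      linear_combination this
    have hDz : (Bden c).eval z₀ ≠ 0 := eval_Bden_ne hc hb₀.le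
    have hd : HasDerivAt (fun z => (Bnum l c).eval z / (Bden c).eval z)
        (((Bnum l c).derivative.eval z₀ * (Bden c).eval z₀ -
          (Bnum l c).eval z₀ * (Bden c).derivative.eval z₀) / (Bden c).eval z₀ ^ 2) z₀ :=
      ((Bnum l c).hasDerivAt z₀).div ((Bden c).hasDerivAt z₀) hDz
    have hval0 : ((Bnum l c).derivative.eval z₀ * (Bden c).eval z₀ -
        (Bnum l c).eval z₀ * (Bden c).derivative.eval z₀) / (Bden c).eval z₀ ^ 2 = 0 := by
      rw [hNz, hN'z]; ring
    rw [hval0] at hd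
    exact (hd.congr_of_eventuallyEq hev).deriv

lemma lift_unique (hC : IsBlaschke e C) (γ δ₁ δ₂ : ℝ → ℂ)
    (hδ₁c : ContinuousOn δ₁ (Set.Icc 0 1)) (hδ₂c : ContinuousOn δ₂ (Set.Icc 0 1))
    (hδ₁ : ∀ t ∈ Set.Icc (0:ℝ) 1, δ₁ t ∈ Metric.ball (0:ℂ) 1 ∧ C (δ₁ t) = γ t)
    (hδ₂ : ∀ t ∈ Set.Icc (0:ℝ) 1, δ₂ t ∈ Metric.ball (0:ℂ) 1 ∧ C (δ₂ t) = γ t)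
    (hγ : ∀ t ∈ Set.Icc (0:ℝ) 1, γ t ∉ critVals C)
    (h0 : δ₁ 0 = δ₂ 0) : δ₁ 1 = δ₂ 1 := by
  haveI : PreconnectedSpace (Set.Icc (0:ℝ) 1) :=
    Subtype.preconnectedSpace isPreconnected_Icc
  set T : Set (Set.Icc (0:ℝ) 1) := {t | δ₁ ↑t = δ₂ ↑t} with hT
  have hclosed : IsClosed T :=
    isClosed_eq (hδ₁c.restrict) (hδ₂c.restrict)
  have hopen : IsOpen T := by
    rw [isOpen_iff_mem_nhds]
    intro t₀ ht₀
    have ht₀I : (t₀ : ℝ) ∈ Set.Icc (0:ℝ) 1 := t₀.2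
    obtain ⟨hball₁, hCeq₁⟩ := hδ₁ _ ht₀I
    set w := δ₁ ↑t₀ with hw
    have hwb : ‖w‖ < 1 := mem_ball_iff_abs.mp hball₁
    have hdC0 : deriv C w ≠ 0 := by
      intro h
      exact hγ _ ht₀I ⟨w, ⟨hball₁, h⟩, hCeq₁⟩
    obtain ⟨p, hp⟩ := blaschkeAnalyticAt hC hwb
    have hsd : HasStrictDerivAt C (deriv C w) w := by
      have := hp.hasStrictDerivAt
      rwa [← hp.deriv] at this
    have hleft := (hsd.hasStrictFDerivAt_equiv hdC0).eventually_left_inverse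
    obtain ⟨U, hUnhds, hU⟩ := Filter.eventually_iff_exists_mem.mp hleft
    have h1 : δ₁ ⁻¹' U ∈ nhdsWithin (t₀ : ℝ) (Set.Icc 0 1) := (hδ₁c _ ht₀I) hUnhds
    have h2 : δ₂ ⁻¹' U ∈ nhdsWithin (t₀ : ℝ) (Set.Icc 0 1) := by
      have hδ₂w : δ₂ ↑t₀ = w := ht₀.symm
      exact (hδ₂c _ ht₀I) (by rw [hδ₂w]; exact hUnhds)
    have hev : {x : ℝ | δ₁ x = δ₂ x} ∈ nhdsWithin (t₀ : ℝ) (Set.Icc 0 1) := by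
      filter_upwards [h1, h2, self_mem_nhdsWithin] with t ht1 ht2 htI
      have e1 : (hsd.hasStrictFDerivAt_equiv hdC0).localInverse C _ w (C (δ₁ t)) = δ₁ t :=
        hU _ ht1
      have e2 : (hsd.hasStrictFDerivAt_equiv hdC0).localInverse C _ w (C (δ₂ t)) = δ₂ t :=
        hU _ ht2
      have hCeq : C (δ₁ t) = C (δ₂ t) := by rw [(hδ₁ t htI).2, (hδ₂ t htI).2]
      show δ₁ t = δ₂ t
      rw [← e1, ← e2, hCeq]
    have : (Subtype.val : Set.Icc (0:ℝ) 1 → ℝ) ⁻¹' {x | δ₁ x = δ₂ x} ∈ nhds t₀ :=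
      preimage_coe_mem_nhds_subtype.mpr hev
    exact this
  rcases isClopen_iff.mp ⟨hclosed, hopen⟩ with h | h
  · exfalso
    have : (⟨0, by norm_num⟩ : Set.Icc (0:ℝ) 1) ∈ T := h0
    rw [h] at this
    exact this
  · have : (⟨1, by norm_num⟩ : Set.Icc (0:ℝ) 1) ∈ T := by rw [h]; trivial
    exact this

end BlaschkeAux

/-- suppose `A = C ∘ A₁`, `B = C ∘ B₁` with `deg C = e > 1`, `ζ ∈ 𝔻`
a common regular value of `A, B` (of degree `d`), and the fibers are labeled so
that `A₁ (a i) = B₁ (b i) ∈ C⁻¹(ζ)` for every `i`.  Define `i ∼₁ j ↔ A₁ (a i) = A₁ (a j)`.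
Then `∼₁` is non-trivial, `γ_A*(i) ∼₁ γ_B*(i)` for every admissible loop `γ` and
index `i`, the relation `∼` is contained in `∼₁`, and in particular `∼` is
non-trivial for this labeling. -/
theorem nontrivial_relation_of_common_factorization
    (d m e : ℕ) (hd : 0 < d) (A B A₁ B₁ C : ℂ → ℂ)
    (hA : IsBlaschke d A) (hB : IsBlaschke d B)
    (hA₁ : IsBlaschke m A₁) (hB₁ : IsBlaschke m B₁)
    (hC : IsBlaschke e C) (he : 1 < e)
    (hAcomp : ∀ z : ℂ, ‖z‖ ≤ 1 → A z = C (A₁ z))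
    (hBcomp : ∀ z : ℂ, ‖z‖ ≤ 1 → B z = C (B₁ z))
    (ζ : ℂ) (hζ : ζ ∈ Metric.ball (0:ℂ) 1)
    (hreg : ζ ∉ critVals A ∪ critVals B)
    (a b : Fin d → ℂ) (ha : IsFiberLabeling A ζ a) (hb : IsFiberLabeling B ζ b)
    (hmatch : ∀ i, A₁ (a i) = B₁ (b i) ∧ C (A₁ (a i)) = ζ) :
    (∃ i j : Fin d, A₁ (a i) ≠ A₁ (a j)) ∧
    (∀ γ : ℝ → ℂ, IsAdmLoop (critVals A ∪ critVals B) ζ γ →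
      ∀ i j k : Fin d, LiftEnds A a γ i j → LiftEnds B b γ i k →
        A₁ (a j) = A₁ (a k)) ∧
    (∀ j k : Fin d, monSim A B ζ a b j k → A₁ (a j) = A₁ (a k)) ∧
    (∃ j k : Fin d, ¬ monSim A B ζ a b j k) := by
  classical
  obtain ⟨hcritA, hcritB⟩ : ζ ∉ critVals A ∧ ζ ∉ critVals B := by
    constructor <;> (intro h; exact hreg (by simp [h]))
  have habsζ : ‖ζ‖ < 1 := BlaschkeAux.mem_ball_iff_abs.mp hζ
  have hcritCA : critVals C ⊆ critVals A :=
    BlaschkeAux.critVals_comp_subset hA₁ hC hAcomp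
  -- Part 1
  have part1 : ∃ i j : Fin d, A₁ (a i) ≠ A₁ (a j) := by
    have hnocrit : ∀ w, ‖w‖ < 1 → C w = ζ → deriv C w ≠ 0 := by
      intro w hw hCw hder
      exact hcritA (hcritCA ⟨w, ⟨BlaschkeAux.mem_ball_iff_abs.mpr hw, hder⟩, hCw⟩)
    obtain ⟨w₁, w₂, hw₁, hw₂, hC₁, hC₂, hne⟩ :=
      BlaschkeAux.blaschkeTwoFiber hC he habsζ hnocrit
    obtain ⟨z₁, hz₁, hz₁'⟩ := BlaschkeAux.blaschkeSurj hA₁ hw₁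
    obtain ⟨z₂, hz₂, hz₂'⟩ := BlaschkeAux.blaschkeSurj hA₁ hw₂
    have hA₁' : A z₁ = ζ := by rw [hAcomp z₁ hz₁.le, hz₁', hC₁]
    have hA₂' : A z₂ = ζ := by rw [hAcomp z₂ hz₂.le, hz₂', hC₂]
    obtain ⟨i, hi⟩ := (ha.2.2 z₁ (BlaschkeAux.mem_ball_iff_abs.mpr hz₁)).mp hA₁'
    obtain ⟨j, hj⟩ := (ha.2.2 z₂ (BlaschkeAux.mem_ball_iff_abs.mpr hz₂)).mp hA₂'
    refine ⟨i, j, ?_⟩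
    rw [← hi, ← hj, hz₁', hz₂']
    exact hne
  -- Part 2
  have part2 : ∀ γ : ℝ → ℂ, IsAdmLoop (critVals A ∪ critVals B) ζ γ →
      ∀ i j k : Fin d, LiftEnds A a γ i j → LiftEnds B b γ i k →
        A₁ (a j) = A₁ (a k) := by
    intro γ hγ i j k hAl hBl
    obtain ⟨α, hαc, hα, hα0, hα1⟩ := hAl
    obtain ⟨β, hβc, hβ, hβ0, hβ1⟩ := hBl
    have hcontA₁ : ContinuousOn A₁ (Metric.ball (0:ℂ) 1) := fun z hz =>
      (BlaschkeAux.blaschkeAnalyticAt hA₁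
        (BlaschkeAux.mem_ball_iff_abs.mp hz)).continuousAt.continuousWithinAt
    have hcontB₁ : ContinuousOn B₁ (Metric.ball (0:ℂ) 1) := fun z hz =>
      (BlaschkeAux.blaschkeAnalyticAt hB₁
        (BlaschkeAux.mem_ball_iff_abs.mp hz)).continuousAt.continuousWithinAt
    have hδ₁c : ContinuousOn (A₁ ∘ α) (Set.Icc 0 1) :=
      hcontA₁.comp hαc fun t ht => (hα t ht).1
    have hδ₂c : ContinuousOn (B₁ ∘ β) (Set.Icc 0 1) :=
      hcontB₁.comp hβc fun t ht => (hβ t ht).1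
    have hδ₁ : ∀ t ∈ Set.Icc (0:ℝ) 1,
        (A₁ ∘ α) t ∈ Metric.ball (0:ℂ) 1 ∧ C ((A₁ ∘ α) t) = γ t := by
      intro t ht
      obtain ⟨h1, h2⟩ := hα t ht
      have habs := BlaschkeAux.mem_ball_iff_abs.mp h1
      exact ⟨BlaschkeAux.mem_ball_iff_abs.mpr (BlaschkeAux.blaschkeMapsBall hA₁ habs),
        by rw [Function.comp_apply, ← hAcomp (α t) habs.le, h2]⟩
    have hδ₂ : ∀ t ∈ Set.Icc (0:ℝ) 1,
        (B₁ ∘ β) t ∈ Metric.ball (0:ℂ) 1 ∧ C ((B₁ ∘ β) t) = γ t := by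
      intro t ht
      obtain ⟨h1, h2⟩ := hβ t ht
      have habs := BlaschkeAux.mem_ball_iff_abs.mp h1
      exact ⟨BlaschkeAux.mem_ball_iff_abs.mpr (BlaschkeAux.blaschkeMapsBall hB₁ habs),
        by rw [Function.comp_apply, ← hBcomp (β t) habs.le, h2]⟩
    have hγC : ∀ t ∈ Set.Icc (0:ℝ) 1, γ t ∉ critVals C := by
      intro t ht hmem
      exact (hγ.2.2.2 t ht).2 (Set.mem_union_left _ (hcritCA hmem))
    have h0 : (A₁ ∘ α) 0 = (B₁ ∘ β) 0 := by
      simp only [Function.comp_apply, hα0, hβ0]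
      exact (hmatch i).1
    have h1 := BlaschkeAux.lift_unique hC γ (A₁ ∘ α) (B₁ ∘ β) hδ₁c hδ₂c hδ₁ hδ₂ hγC h0
    simp only [Function.comp_apply, hα1, hβ1] at h1
    rw [h1, ← (hmatch k).1]
  -- Part 3
  have part3 : ∀ j k : Fin d, monSim A B ζ a b j k → A₁ (a j) = A₁ (a k) := by
    intro j k h
    induction h with
    | rel x y hxy =>
      obtain ⟨γ, hγ, i, hcase⟩ := hxy
      rcases hcase with ⟨hBl, hAl⟩ | ⟨hBl, hAl⟩
      · exact (part2 γ hγ i y x hAl hBl).symm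
      · exact part2 γ hγ i x y hAl hBl
    | refl x => rfl
    | symm x y _ ih => exact ih.symm
    | trans x y z _ _ ih₁ ih₂ => exact ih₁.trans ih₂
  refine ⟨part1, part2, part3, ?_⟩
  obtain ⟨i, j, hne⟩ := part1
  exact ⟨i, j, fun h => hne (part3 i j h)⟩
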